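/- Define φ(x, y, t) = sin(2·arctan(e^{−2πt}·tan(π(x + y)/2))) on the strip S = {(x, y) : |x + y| < 1} and t ∈ ℝ. Then φ(x, y, 0) = sin(π(x + y)) on S, and φ satisfies the two-dimensional advection equation ∂_t φ + sin(π(x + y))·(∂_x φ + ∂_y φ) = 0 for all (x, y) ∈ S and t ∈ ℝ. -/

import Mathlib

set_option maxHeartbeats 1000000


open Real

lemma aux_bounds {u : ℝ} (h : |u| < 1) :
    -(π/2) < π * u / 2 ∧ π * u / 2 < π / 2 := by
  have := Real.pi_pos
  obtain ⟨h1, h2⟩ := abs_lt.mp h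
  constructor <;> nlinarith

lemma chain_tan (E : ℝ) {g : ℝ → ℝ} {g' p a : ℝ} (hg : HasDerivAt g g' p)
    (hv : g p = a) (hcne : Real.cos a ≠ 0) :
    HasDerivAt (fun u : ℝ => Real.sin (2 * Real.arctan (E * Real.tan (g u))))
      (Real.cos (2 * Real.arctan (E * Real.tan a)) *
        (2 * (1 / (1 + (E * Real.tan a) ^ 2) * (E * (1 / Real.cos a ^ 2 * g'))))) p := by
  subst hv
  have h1 : HasDerivAt (fun u : ℝ => E * Real.tan (g u))
      (E * (1 / Real.cos (g p) ^ 2 * g')) p :=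
    ((Real.hasDerivAt_tan hcne).comp p hg).const_mul E
  have h2 := (Real.hasDerivAt_arctan (E * Real.tan (g p))).comp p h1
  have h3 := h2.const_mul 2
  have h4 := (Real.hasDerivAt_sin (2 * Real.arctan (E * Real.tan (g p)))).comp p h3
  simpa [Function.comp_def] using h4

/-- The function `φ(x, y, t) = sin(2·arctan(e^{−2πt}·tan(π(x+y)/2)))` satisfies
`φ(x, y, 0) = sin(π(x+y))` and solves the two-dimensional advection equation
`∂ₜφ + sin(π(x+y))·(∂ₓφ + ∂ᵧφ) = 0` on the strip `|x + y| < 1`. -/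
theorem exact_solution_2d_diagonal_velocity :
    (∀ x y : ℝ, |x + y| < 1 →
      Real.sin (2 * Real.arctan
          (Real.exp (-(2 * π * (0 : ℝ))) * Real.tan (π * (x + y) / 2))) =
        Real.sin (π * (x + y))) ∧
    (∀ x y t : ℝ, |x + y| < 1 →
      deriv (fun s : ℝ =>
          Real.sin (2 * Real.arctan
            (Real.exp (-(2 * π * s)) * Real.tan (π * (x + y) / 2)))) t +
        Real.sin (π * (x + y)) *
          (deriv (fun u : ℝ =>
              Real.sin (2 * Real.arctan
                (Real.exp (-(2 * π * t)) * Real.tan (π * (u + y) / 2)))) x +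
            deriv (fun w : ℝ =>
              Real.sin (2 * Real.arctan
                (Real.exp (-(2 * π * t)) * Real.tan (π * (x + w) / 2)))) y)
        = 0) := by
  constructor
  · intro x y h
    obtain ⟨h1, h2⟩ := aux_bounds h
    rw [show (-(2 * π * (0:ℝ))) = 0 by ring, Real.exp_zero, one_mul,
      Real.arctan_tan h1 h2]
    ring_nf
  · intro x y t h
    obtain ⟨h1, h2⟩ := aux_bounds h
    have hcos : 0 < Real.cos (π * (x + y) / 2) := Real.cos_pos_of_mem_Ioo ⟨h1, h2⟩
    have hcne : Real.cos (π * (x + y) / 2) ≠ 0 := ne_of_gt hcos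
    set a : ℝ := π * (x + y) / 2 with ha
    set c : ℝ := Real.tan a with hc
    set E : ℝ := Real.exp (-(2 * π * t)) with hE
    set z : ℝ := E * c with hz
    -- time derivative
    have hT : HasDerivAt (fun s : ℝ =>
        Real.sin (2 * Real.arctan (Real.exp (-(2 * π * s)) * c)))
        (Real.cos (2 * Real.arctan z) * (2 * (1 / (1 + z ^ 2) * (-(2 * π) * E * c)))) t := by
      have hg : HasDerivAt (fun s : ℝ => Real.exp (-(2 * π * s)) * c)
          (-(2 * π) * E * c) t := by
        have h0 : HasDerivAt (fun s : ℝ => -(2 * π * s)) (-(2 * π)) t := by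
          simpa [Pi.neg_def] using ((hasDerivAt_id t).const_mul (2 * π)).neg
        have := (h0.exp).mul_const c
        simpa [hE, mul_comm, mul_assoc] using this
      have h1 : HasDerivAt (fun s : ℝ => Real.arctan (Real.exp (-(2 * π * s)) * c))
          (1 / (1 + z ^ 2) * (-(2 * π) * E * c)) t := by
        have := (Real.hasDerivAt_arctan (E * c)).comp t hg
        simpa [hz, Function.comp_def] using this
      have h2 := h1.const_mul 2
      have h3 := (Real.hasDerivAt_sin (2 * Real.arctan z)).comp t h2
      simpa [hz, Function.comp_def, mul_assoc, mul_left_comm] using h3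
    -- spatial derivatives
    have hlinx : HasDerivAt (fun u : ℝ => π * (u + y) / 2) (π / 2) x := by
      simpa using (((hasDerivAt_id x).add_const y).const_mul π).div_const 2
    have hliny : HasDerivAt (fun w : ℝ => π * (x + w) / 2) (π / 2) y := by
      simpa using (((hasDerivAt_const y x).add (hasDerivAt_id y)).const_mul π).div_const 2
    have hXx := chain_tan E hlinx (by rw [ha]) hcne
    have hXy := chain_tan E hliny (by rw [ha]) hcne
    rw [hT.deriv, hXx.deriv, hXy.deriv]
    have hsin : Real.sin (π * (x + y)) = 2 * c * Real.cos a ^ 2 := by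
      rw [show π * (x + y) = 2 * a by rw [ha]; ring, Real.sin_two_mul, hc,
        Real.tan_eq_sin_div_cos]
      field_simp
    rw [hsin, ← hc, ← hz]
    have hden : (1 : ℝ) + z ^ 2 ≠ 0 := by positivity
    field_simp
    ring
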